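/- (Rate of convergence in the LLN for finite free multiplicative convolution.) Let p be a monic polynomial of degree d with only nonnegative real roots, with root multiset Λ, let k be the number of zeros in Λ, and let 1 ≤ i ≤ d−k. For each n ≥ 1 let λ_i^(n) denote the i-th largest nonnegative real root of p^{⊠_d n}. Then |log((λ_i^(n))^{1/n}) − log(ẽ_i(Λ)/ẽ_{i−1}(Λ))| ≤ max(log binom(d,i−1), log binom(d,i)) / n for all n ≥ 1; in particular log((λ_i^(n))^{1/n}) = log(ẽ_i(Λ)/ẽ_{i−1}(Λ)) + O(1/n) as n → ∞. -/

import Mathlib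

open Polynomial Filter

/-- Finite free multiplicative convolution of two polynomials of degree `d`:
for `p(x) = Σ (-1)^i p_i x^{d-i}` and `q(x) = Σ (-1)^i q_i x^{d-i}`,
`(p ⊠_d q)(x) = Σ (-1)^i (p_i q_i / binom(d,i)) x^{d-i}`. -/
noncomputable def ffmul (d : ℕ) (p q : Polynomial ℝ) : Polynomial ℝ :=
  ∑ i ∈ Finset.range (d + 1),
    Polynomial.C ((-1 : ℝ) ^ i * p.coeff (d - i) * q.coeff (d - i) / (d.choose i : ℝ)) *
      Polynomial.X ^ (d - i)

/-- `ffmulPow d p n` is the `n`-th finite free multiplicative convolution power `p^{⊠_d n}`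
(for `n ≥ 1`); the convolution identity `(x-1)^d` is used as the 0-th power. -/
noncomputable def ffmulPow (d : ℕ) (p : Polynomial ℝ) : ℕ → Polynomial ℝ
  | 0 => (Polynomial.X - 1) ^ d
  | n + 1 => ffmul d p (ffmulPow d p n)

/-- Normalized elementary symmetric function `ẽ_i(Λ) = e_i(Λ) / binom(d,i)`. -/
noncomputable def etilde (d i : ℕ) (Λ : Multiset ℝ) : ℝ :=
  Λ.esymm i / (d.choose i : ℝ)

/-! ### Auxiliary lemmas -/

lemma coeff_multiset_prod_aux (M : Multiset ℝ) (d j : ℕ) (hM : Multiset.card M = d)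
    (hj : j ≤ d) :
    ((M.map fun r => X - C r).prod).coeff (d - j) = (-1 : ℝ) ^ j * M.esymm j := by
  have h : d - j ≤ Multiset.card M := by omega
  rw [Multiset.prod_X_sub_C_coeff M h, hM, Nat.sub_sub_self hj]

lemma ffmul_coeff_aux (d : ℕ) (p q : Polynomial ℝ) (j : ℕ) (hj : j ≤ d) :
    (ffmul d p q).coeff (d - j)
      = (-1 : ℝ) ^ j * p.coeff (d - j) * q.coeff (d - j) / (d.choose j : ℝ) := by
  rw [ffmul, Polynomial.finset_sum_coeff]
  rw [Finset.sum_eq_single j]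
  · simp [Polynomial.coeff_C_mul, Polynomial.coeff_X_pow]
  · intro b hb hbj
    have hb' : b ≤ d := by
      have := Finset.mem_range.mp hb; omega
    have hne : d - j ≠ d - b := by omega
    simp [Polynomial.coeff_C_mul, Polynomial.coeff_X_pow, hne]
  · intro h
    exact absurd (Finset.mem_range.mpr (by omega)) h

lemma coeff_X_sub_one_pow_aux (d j : ℕ) (hj : j ≤ d) :
    ((X - 1 : Polynomial ℝ) ^ d).coeff (d - j) = (-1 : ℝ) ^ j * (d.choose j : ℝ) := by
  have h1 : (X - 1 : Polynomial ℝ) ^ d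
      = ((Multiset.replicate d (1 : ℝ)).map fun r => X - C r).prod := by
    rw [Multiset.map_replicate, Multiset.prod_replicate, map_one]
  have h2 : Multiset.replicate d (1 : ℝ) = (Finset.Icc 1 d).val.map (fun _ => (1 : ℝ)) := by
    rw [Multiset.map_const']
    congr 1
    simp [Nat.card_Icc]
  rw [h1, coeff_multiset_prod_aux _ d j (by simp) hj]
  congr 1
  rw [h2, Finset.esymm_map_val]
  simp [Finset.card_powersetCard, Nat.card_Icc]

lemma ffmulPow_coeff_aux (d : ℕ) (p : Polynomial ℝ) (Λ : Multiset ℝ)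
    (hcard : Multiset.card Λ = d)
    (hp : p = (Λ.map fun r => X - C r).prod) :
    ∀ n, 1 ≤ n → ∀ j, j ≤ d →
      (ffmulPow d p n).coeff (d - j)
        = (-1 : ℝ) ^ j * (Λ.esymm j ^ n / (d.choose j : ℝ) ^ (n - 1)) := by
  have hpc : ∀ j, j ≤ d → p.coeff (d - j) = (-1 : ℝ) ^ j * Λ.esymm j := by
    intro j hj
    rw [hp, coeff_multiset_prod_aux Λ d j hcard hj]
  have hch : ∀ j, j ≤ d → (d.choose j : ℝ) ≠ 0 := by
    intro j hj
    exact_mod_cast (Nat.choose_pos hj).ne'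
  have key : ∀ a u v c : ℝ, a * a = 1 → a * (a * u) * (a * v) / c = a * (u * v / c) := by
    intro a u v c h
    calc a * (a * u) * (a * v) / c = (a * a) * (a * (u * v)) / c := by ring
      _ = a * (u * v / c) := by rw [h]; ring
  have hsq : ∀ j : ℕ, ((-1 : ℝ) ^ j) * ((-1 : ℝ) ^ j) = 1 := by
    intro j
    rw [← pow_add]
    exact Even.neg_one_pow ⟨j, rfl⟩
  intro n hn
  induction n with
  | zero => omega
  | succ m ih =>
    intro j hj
    rcases Nat.eq_zero_or_pos m with hm | hm
    · subst hm
      show (ffmul d p (ffmulPow d p 0)).coeff (d - j) = _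
      rw [ffmul_coeff_aux d _ _ j hj, hpc j hj]
      show (-1 : ℝ) ^ j * ((-1 : ℝ) ^ j * Λ.esymm j)
          * ((X - 1 : Polynomial ℝ) ^ d).coeff (d - j) / (d.choose j : ℝ) = _
      rw [coeff_X_sub_one_pow_aux d j hj, key _ _ _ _ (hsq j)]
      have h0 := hch j hj
      congr 1
      field_simp
      simp
    · obtain ⟨m', rfl⟩ : ∃ m', m = m' + 1 := ⟨m - 1, by omega⟩
      have hcm := ih (by omega) j hj
      show (ffmul d p (ffmulPow d p (m' + 1))).coeff (d - j) = _
      rw [ffmul_coeff_aux d _ _ j hj, hpc j hj, hcm, key _ _ _ _ (hsq j)]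
      have h0 := hch j hj
      have h0' : ((d.choose j : ℝ)) ^ m' ≠ 0 := pow_ne_zero _ h0
      congr 1
      have e1 : m' + 1 - 1 = m' := by omega
      have e2 : m' + 1 + 1 - 1 = m' + 1 := by omega
      rw [e1, e2]
      field_simp
      ring

lemma prod_le_prod_Icc_aux (g : ℕ → ℝ) (d : ℕ)
    (hg0 : ∀ a, 1 ≤ a → a ≤ d → 0 ≤ g a)
    (hmono : ∀ a b, 1 ≤ a → a ≤ b → b ≤ d → g b ≤ g a) :
    ∀ i, i ≤ d → ∀ S : Finset ℕ, S ⊆ Finset.Icc 1 d → S.card = i →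
      ∏ x ∈ S, g x ≤ ∏ x ∈ Finset.Icc 1 i, g x := by
  intro i
  induction i with
  | zero =>
    intro _ S _ hS
    rw [Finset.card_eq_zero.mp hS]
    simp
  | succ m ih =>
    intro hid S hSsub hScard
    have hne : S.Nonempty := Finset.card_pos.mp (by omega)
    have hMS : S.max' hne ∈ S := S.max'_mem hne
    have hMIcc := Finset.mem_Icc.mp (hSsub hMS)
    have hcardle : S.card ≤ S.max' hne := by
      have hsub2 : S ⊆ Finset.Icc 1 (S.max' hne) := by
        intro x hx
        rw [Finset.mem_Icc]
        exact ⟨(Finset.mem_Icc.mp (hSsub hx)).1, S.le_max' x hx⟩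
      have := Finset.card_le_card hsub2
      simpa [Nat.card_Icc] using this
    have hiM : m + 1 ≤ S.max' hne := hScard ▸ hcardle
    have herase : (S.erase (S.max' hne)).card = m := by
      rw [Finset.card_erase_of_mem hMS, hScard]
      omega
    have hsub' : S.erase (S.max' hne) ⊆ Finset.Icc 1 d :=
      (Finset.erase_subset _ _).trans hSsub
    have ihe := ih (by omega) (S.erase (S.max' hne)) hsub' herase
    have h1 : ∏ x ∈ S, g x = g (S.max' hne) * ∏ x ∈ S.erase (S.max' hne), g x :=
      (Finset.mul_prod_erase S g hMS).symm
    have h2 : ∏ x ∈ Finset.Icc 1 (m + 1), g x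
        = (∏ x ∈ Finset.Icc 1 m, g x) * g (m + 1) :=
      Finset.prod_Icc_succ_top (by omega) g
    have hgM : g (S.max' hne) ≤ g (m + 1) := hmono (m + 1) _ (by omega) hiM hMIcc.2
    have hprodnn : 0 ≤ ∏ x ∈ S.erase (S.max' hne), g x := by
      refine Finset.prod_nonneg fun x hx => ?_
      have := Finset.mem_Icc.mp (hsub' hx)
      exact hg0 x this.1 this.2
    have hgnn : 0 ≤ g (m + 1) := hg0 (m + 1) (by omega) (by omega)
    rw [h1, h2, mul_comm (∏ x ∈ Finset.Icc 1 m, g x) (g (m + 1))]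
    exact mul_le_mul hgM ihe hprodnn hgnn

lemma esymm_pos_aux (Λ : Multiset ℝ) (i : ℕ) (hnn : ∀ x ∈ Λ, (0 : ℝ) ≤ x)
    (hi : i ≤ Multiset.card (Λ.filter (fun x => x ≠ 0))) :
    0 < Λ.esymm i := by
  classical
  set Λ' := Λ.filter (fun x => x ≠ 0) with hΛ'
  have hle : Λ' ≤ Λ := Multiset.filter_le _ _
  set t : Multiset ℝ := (↑(Λ'.toList.take i) : Multiset ℝ) with ht
  have htle : t ≤ Λ' := by
    have h1 : (↑(Λ'.toList.take i) : Multiset ℝ) ≤ (↑Λ'.toList : Multiset ℝ) :=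
      Multiset.coe_le.mpr (List.take_sublist i Λ'.toList).subperm
    rwa [Multiset.coe_toList] at h1
  have hlen : Λ'.toList.length = Multiset.card Λ' := by
    rw [← Multiset.coe_card, Multiset.coe_toList]
  have htcard : Multiset.card t = i := by
    rw [ht, Multiset.coe_card, List.length_take]
    omega
  have htpos : ∀ x ∈ t, 0 < x := by
    intro x hx
    have hx' : x ∈ Λ' := Multiset.mem_of_le htle hx
    have hxf := Multiset.mem_filter.mp hx'
    exact lt_of_le_of_ne (hnn x hxf.1) (Ne.symm hxf.2)
  have hterm : 0 < t.prod := Multiset.prod_pos htpos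
  have hmem : t.prod ∈ (Λ.powersetCard i).map Multiset.prod :=
    Multiset.mem_map_of_mem _ (Multiset.mem_powersetCard.mpr ⟨le_trans htle hle, htcard⟩)
  have hnonneg : ∀ y ∈ (Λ.powersetCard i).map Multiset.prod, (0 : ℝ) ≤ y := by
    intro y hy
    obtain ⟨u, hu, rfl⟩ := Multiset.mem_map.mp hy
    have hu' := Multiset.mem_powersetCard.mp hu
    exact Multiset.prod_nonneg fun x hx => hnn x (Multiset.mem_of_le hu'.1 hx)
  have := Multiset.single_le_sum hnonneg _ hmem
  calc (0 : ℝ) < t.prod := hterm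
    _ ≤ ((Λ.powersetCard i).map Multiset.prod).sum := this
    _ = Λ.esymm i := rfl

open Asymptotics in
/-- rate of convergence in the LLN for `⊠_d`:
`|log((λ_i^(n))^{1/n}) − log(ẽ_i/ẽ_{i-1})| ≤ max(log binom(d,i-1), log binom(d,i))/n`,
in particular the error is `O(1/n)`. -/
theorem lln_rate (d k i : ℕ) (p : Polynomial ℝ) (Λ : Multiset ℝ) (lam : ℕ → ℕ → ℝ)
    (hcard : Multiset.card Λ = d) (hnonneg : ∀ x ∈ Λ, (0 : ℝ) ≤ x)
    (hp : p = (Λ.map fun r => Polynomial.X - Polynomial.C r).prod)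
    (hk : Λ.count 0 = k)
    (hroots : ∀ n, 1 ≤ n → ffmulPow d p n
        = ∏ j ∈ Finset.Icc 1 d, (Polynomial.X - Polynomial.C (lam n j)))
    (hmono : ∀ n, 1 ≤ n → ∀ a b, 1 ≤ a → a ≤ b → b ≤ d → lam n b ≤ lam n a)
    (hnneg : ∀ n, 1 ≤ n → ∀ a, 1 ≤ a → a ≤ d → 0 ≤ lam n a)
    (hi : 1 ≤ i) (hik : i ≤ d - k) :
    (∀ n : ℕ, 1 ≤ n →
      |Real.log ((lam n i) ^ (1 / (n : ℝ))) - Real.log (etilde d i Λ / etilde d (i - 1) Λ)|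
        ≤ max (Real.log (d.choose (i - 1) : ℝ)) (Real.log (d.choose i : ℝ)) / n) ∧
    (fun n : ℕ =>
        Real.log ((lam n i) ^ (1 / (n : ℝ))) - Real.log (etilde d i Λ / etilde d (i - 1) Λ))
      =O[Filter.atTop] fun n : ℕ => 1 / (n : ℝ) := by
  classical
  have hkd : k ≤ d := by
    have h := Multiset.count_le_card (0 : ℝ) Λ
    rw [hk, hcard] at h
    exact h
  have hid : i ≤ d := le_trans hik (Nat.sub_le d k)
  have hi1d : i - 1 ≤ d := by omega
  -- cardinality of the nonzero part of Λ
  have hfiltercard : Multiset.card (Λ.filter (fun x => x ≠ 0)) = d - k := by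
    have h1 : Λ.filter (fun x => (0 : ℝ) = x) + Λ.filter (fun x => ¬ (0 : ℝ) = x) = Λ :=
      Multiset.filter_add_not _ Λ
    have h2 : Multiset.card (Λ.filter (fun x => (0 : ℝ) = x)) = k := by
      rw [← Multiset.count_eq_card_filter_eq, hk]
    have h3 := congrArg Multiset.card h1
    rw [Multiset.card_add, h2, hcard] at h3
    have h4 : Λ.filter (fun x => ¬ (0 : ℝ) = x) = Λ.filter (fun x => x ≠ 0) := by
      apply Multiset.filter_congr
      intro x _
      constructor
      · intro h; exact fun hx => h hx.symm
      · intro h hx; exact h hx.symm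
    rw [h4] at h3
    omega
  have hesympos : ∀ j, j ≤ d - k → 0 < Λ.esymm j := by
    intro j hj
    exact esymm_pos_aux Λ j hnonneg (by rw [hfiltercard]; exact hj)
  have hchposR : ∀ j, j ≤ d → (0 : ℝ) < (d.choose j : ℝ) := by
    intro j hj
    exact_mod_cast Nat.choose_pos hj
  have hc1pos : (0 : ℝ) < (d.choose (i - 1) : ℝ) := hchposR (i - 1) hi1d
  have hc2pos : (0 : ℝ) < (d.choose i : ℝ) := hchposR i hid
  have hAi : 0 < etilde d i Λ := div_pos (hesympos i hik) hc2pos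
  have hAi1 : 0 < etilde d (i - 1) Λ := div_pos (hesympos (i - 1) (by omega)) hc1pos
  have hcpos : 0 < etilde d i Λ / etilde d (i - 1) Λ := div_pos hAi hAi1
  have hmain : ∀ n : ℕ, 1 ≤ n →
      |Real.log ((lam n i) ^ (1 / (n : ℝ))) - Real.log (etilde d i Λ / etilde d (i - 1) Λ)|
        ≤ max (Real.log (d.choose (i - 1) : ℝ)) (Real.log (d.choose i : ℝ)) / n := by
    intro n hn
    have hMcard : Multiset.card ((Finset.Icc 1 d).val.map (lam n)) = d := by
      simp [Nat.card_Icc]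
    -- esymm of the root multiset of the n-th convolution power
    have hEn : ∀ j, j ≤ d →
        ((Finset.Icc 1 d).val.map (lam n)).esymm j
          = Λ.esymm j ^ n / (d.choose j : ℝ) ^ (n - 1) := by
      intro j hj
      have hprod : ((((Finset.Icc 1 d).val.map (lam n)).map fun r => X - C r)).prod
          = ffmulPow d p n := by
        rw [hroots n hn, Multiset.map_map, Finset.prod_eq_multiset_prod]
        rfl
      have h1 := coeff_multiset_prod_aux ((Finset.Icc 1 d).val.map (lam n)) d j hMcard hj
      rw [hprod, ffmulPow_coeff_aux d p Λ hcard hp n hn j hj] at h1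
      have hne : ((-1 : ℝ) ^ j) ≠ 0 := pow_ne_zero _ (by norm_num)
      exact (mul_left_cancel₀ hne h1).symm
    -- value of esymm in terms of etilde
    have hEA : ∀ j, j ≤ d →
        ((Finset.Icc 1 d).val.map (lam n)).esymm j
          = (d.choose j : ℝ) * (etilde d j Λ) ^ n := by
      intro j hj
      rw [hEn j hj, etilde, div_pow]
      have h0 : (d.choose j : ℝ) ≠ 0 := (hchposR j hj).ne'
      obtain ⟨m, rfl⟩ : ∃ m, n = m + 1 := ⟨n - 1, by omega⟩
      have e1 : m + 1 - 1 = m := by omega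
      rw [e1]
      field_simp
      ring
    -- lower bound on esymm by the product of the top j roots
    have hlower : ∀ j, j ≤ d →
        (∏ x ∈ Finset.Icc 1 j, lam n x) ≤ ((Finset.Icc 1 d).val.map (lam n)).esymm j := by
      intro j hj
      rw [Finset.esymm_map_val]
      refine Finset.single_le_sum (f := fun t => ∏ x ∈ t, lam n x) ?_ ?_
      · intro t ht
        refine Finset.prod_nonneg fun x hx => ?_
        have ht' := (Finset.mem_powersetCard.mp ht).1 hx
        have := Finset.mem_Icc.mp ht'
        exact hnneg n hn x this.1 this.2
      · exact Finset.mem_powersetCard.mpr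
          ⟨Finset.Icc_subset_Icc_right hj, by simp [Nat.card_Icc]⟩
    -- upper bound on esymm
    have hupper : ∀ j, j ≤ d →
        ((Finset.Icc 1 d).val.map (lam n)).esymm j
          ≤ (d.choose j : ℝ) * ∏ x ∈ Finset.Icc 1 j, lam n x := by
      intro j hj
      rw [Finset.esymm_map_val]
      have hb : ∀ t ∈ Finset.powersetCard j (Finset.Icc 1 d),
          (∏ x ∈ t, lam n x) ≤ ∏ x ∈ Finset.Icc 1 j, lam n x := by
        intro t ht
        have ht' := Finset.mem_powersetCard.mp ht
        exact prod_le_prod_Icc_aux (lam n) d (fun a h1 h2 => hnneg n hn a h1 h2)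
          (fun a b h1 h2 h3 => hmono n hn a b h1 h2 h3) j hj t ht'.1 ht'.2
      have h := Finset.sum_le_card_nsmul (Finset.powersetCard j (Finset.Icc 1 d))
        (fun t => ∏ x ∈ t, lam n x) (∏ x ∈ Finset.Icc 1 j, lam n x) hb
      rw [Finset.card_powersetCard, Nat.card_Icc] at h
      have e1 : d + 1 - 1 = d := by omega
      rw [e1, nsmul_eq_mul] at h
      exact h
    -- abbreviations
    set A := etilde d i Λ with hA
    set A' := etilde d (i - 1) Λ with hA'
    set L := lam n i with hL
    set P := ∏ x ∈ Finset.Icc 1 (i - 1), lam n x with hP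
    have hPi : (∏ x ∈ Finset.Icc 1 i, lam n x) = P * L := by
      have hi' : i - 1 + 1 = i := by omega
      conv_lhs => rw [← hi']
      rw [Finset.prod_Icc_succ_top (by omega), hi']
    have hLnn : 0 ≤ L := hnneg n hn i hi hid
    -- the four inequalities
    have h1 : (etilde d (i - 1) Λ) ^ n ≤ P := by
      have := hupper (i - 1) hi1d
      rw [hEA (i - 1) hi1d, ← hP] at this
      exact le_of_mul_le_mul_left this hc1pos
    have h2 : P ≤ (d.choose (i - 1) : ℝ) * A' ^ n := by
      have := hlower (i - 1) hi1d
      rw [hEA (i - 1) hi1d, ← hP] at this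
      exact this
    have h3 : P * L ≤ (d.choose i : ℝ) * A ^ n := by
      have := hlower i hid
      rw [hEA i hid, hPi] at this
      exact this
    have h4 : A ^ n ≤ P * L := by
      have := hupper i hid
      rw [hEA i hid, hPi] at this
      exact le_of_mul_le_mul_left this hc2pos
    have hApow : (0 : ℝ) < A ^ n := pow_pos hAi n
    have hA'pow : (0 : ℝ) < A' ^ n := pow_pos hAi1 n
    have hLpos : 0 < L := by
      rcases lt_or_ge 0 L with h | h
      · exact h
      · exfalso
        have : P * L ≤ 0 := mul_nonpos_of_nonneg_of_nonpos
          (le_trans (le_of_lt hA'pow) h1) h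
        linarith
    -- upper bound on L
    have hub : L ≤ (d.choose i : ℝ) * (A / A') ^ n := by
      have step : L * A' ^ n ≤ (d.choose i : ℝ) * A ^ n := by
        calc L * A' ^ n ≤ L * P := by
              exact mul_le_mul_of_nonneg_left h1 hLnn
          _ = P * L := by ring
          _ ≤ (d.choose i : ℝ) * A ^ n := h3
      have : L ≤ (d.choose i : ℝ) * A ^ n / A' ^ n := (le_div_iff₀ hA'pow).mpr step
      calc L ≤ (d.choose i : ℝ) * A ^ n / A' ^ n := this
        _ = (d.choose i : ℝ) * (A / A') ^ n := by rw [div_pow]; ring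
    -- lower bound on L
    have hlb : (A / A') ^ n / (d.choose (i - 1) : ℝ) ≤ L := by
      have step : A ^ n ≤ ((d.choose (i - 1) : ℝ) * A' ^ n) * L := by
        calc A ^ n ≤ P * L := h4
          _ ≤ ((d.choose (i - 1) : ℝ) * A' ^ n) * L :=
              mul_le_mul_of_nonneg_right h2 hLnn
      have hpos : (0 : ℝ) < (d.choose (i - 1) : ℝ) * A' ^ n := mul_pos hc1pos hA'pow
      have : A ^ n / ((d.choose (i - 1) : ℝ) * A' ^ n) ≤ L :=
        (div_le_iff₀ hpos).mpr (by linarith [step])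
      calc (A / A') ^ n / (d.choose (i - 1) : ℝ)
          = A ^ n / ((d.choose (i - 1) : ℝ) * A' ^ n) := by
            rw [div_pow]; field_simp
        _ ≤ L := this
    -- pass to logarithms
    have hcAA : 0 < A / A' := hcpos
    have hlog1 : Real.log L ≤ Real.log (d.choose i : ℝ) + n * Real.log (A / A') := by
      have := Real.log_le_log hLpos hub
      rwa [Real.log_mul hc2pos.ne' (pow_pos hcAA n).ne', Real.log_pow] at this
    have hlog2 : n * Real.log (A / A') - Real.log (d.choose (i - 1) : ℝ) ≤ Real.log L := by
      have hq : (0 : ℝ) < (A / A') ^ n / (d.choose (i - 1) : ℝ) :=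
        div_pos (pow_pos hcAA n) hc1pos
      have := Real.log_le_log hq hlb
      rwa [Real.log_div (pow_pos hcAA n).ne' hc1pos.ne', Real.log_pow] at this
    have hn0 : (0 : ℝ) < (n : ℝ) := by exact_mod_cast Nat.lt_of_lt_of_le Nat.zero_lt_one hn
    rw [Real.log_rpow hLpos]
    have hrw : 1 / (n : ℝ) * Real.log L - Real.log (A / A')
        = (Real.log L - n * Real.log (A / A')) / n := by
      field_simp
    rw [hrw, abs_div, abs_of_pos hn0]
    have habs : |Real.log L - n * Real.log (A / A')|
        ≤ max (Real.log (d.choose (i - 1) : ℝ)) (Real.log (d.choose i : ℝ)) := by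
      rw [abs_le]
      constructor
      · have := le_max_left (Real.log (d.choose (i - 1) : ℝ)) (Real.log (d.choose i : ℝ))
        linarith
      · have := le_max_right (Real.log (d.choose (i - 1) : ℝ)) (Real.log (d.choose i : ℝ))
        linarith
    rw [div_eq_mul_inv, div_eq_mul_inv]
    exact mul_le_mul_of_nonneg_right habs (by positivity)
  refine ⟨hmain, ?_⟩
  rw [Asymptotics.isBigO_iff]
  refine ⟨max (Real.log (d.choose (i - 1) : ℝ)) (Real.log (d.choose i : ℝ)), ?_⟩
  filter_upwards [eventually_ge_atTop 1] with n hn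
  have h := hmain n hn
  have hn0 : (0 : ℝ) < (n : ℝ) := by exact_mod_cast Nat.lt_of_lt_of_le Nat.zero_lt_one hn
  rw [Real.norm_eq_abs, Real.norm_eq_abs]
  calc |Real.log ((lam n i) ^ (1 / (n : ℝ))) - Real.log (etilde d i Λ / etilde d (i - 1) Λ)|
      ≤ max (Real.log (d.choose (i - 1) : ℝ)) (Real.log (d.choose i : ℝ)) / n := h
    _ = max (Real.log (d.choose (i - 1) : ℝ)) (Real.log (d.choose i : ℝ)) * |1 / (n : ℝ)| := by
        rw [abs_of_pos (by positivity)]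
        ring
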